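/- arXiv:2411.19606 — 7 statements merged into one kernel-verified Lean document; each statement's English description precedes it below -/
import Mathlib

section
/- For every finite coloring of the natural numbers (with at least 2 colors on ℕ≥2), there exist natural numbers x, y ≥ 2 with x ≠ y such that x, y, and x^y all receive the same color. -/
open Filter

section helpers

lemma ultra_fix {κ : Type*} [Finite κ] (U : Ultrafilter ℕ) (g : ℕ → κ) :
    ∃ v, {N | g N = v} ∈ U := by
  by_contra h
  push_neg at h
  have hmem : ∀ v : κ, {N | g N ≠ v} ∈ U := by
    intro v
    have := (Ultrafilter.compl_mem_iff_notMem (s := {N | g N = v}) (f := U)).2 (h v)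
    simpa [Set.compl_setOf] using this
  have : (⋂ v : κ, {N | g N ≠ v}) ∈ U := Filter.iInter_mem.2 hmem
  obtain ⟨N, hN⟩ := U.nonempty_of_mem this
  simp only [Set.mem_iInter, Set.mem_setOf_eq] at hN
  exact hN (g N) rfl

lemma vdW_fin (κ : Type) [Finite κ] (l : ℕ) :
    ∃ N : ℕ, ∀ c : ℕ → κ, ∃ b d : ℕ, 0 < d ∧ b + l * d ≤ N ∧
      ∀ j, 1 ≤ j → j ≤ l → c (b + j * d) = c (b + d) := by
  by_contra h
  push_neg at h
  choose f hf using h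
  set U : Ultrafilter ℕ := Filter.hyperfilter ℕ with hU
  have hfix : ∀ x : ℕ, ∃ v, {N | f N x = v} ∈ U := fun x => ultra_fix U (fun N => f N x)
  choose cl hcl using hfix
  obtain ⟨a, ha, bb, c0, hmono⟩ :=
    Combinatorics.exists_mono_homothetic_copy (Finset.Icc 1 l) cl
  have hagree : (⋂ j ∈ Finset.Icc 1 l, {N | f N (a * j + bb) = cl (a * j + bb)}) ∈ U := by
    refine Filter.biInter_finset_mem _ |>.2 ?_
    intro j _
    exact hcl (a * j + bb)
  have hbig : {N : ℕ | bb + l * a ≤ N} ∈ U := by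
    have : {N : ℕ | ¬ bb + l * a ≤ N}.Finite := by
      have : {N : ℕ | ¬ bb + l * a ≤ N} ⊆ Set.Iio (bb + l * a) := by
        intro N hN; simp only [Set.mem_setOf_eq, not_le] at hN; exact hN
      exact (Set.finite_Iio _).subset this
    have := Filter.compl_mem_hyperfilter_of_finite this
    simpa [Set.compl_setOf] using this
  obtain ⟨N, hN⟩ := U.nonempty_of_mem (Filter.inter_mem hagree hbig)
  obtain ⟨hN1, hN2⟩ := hN
  simp only [Set.mem_iInter, Set.mem_setOf_eq] at hN1 hN2
  obtain ⟨j, hj1, hj2, hjne⟩ := hf N bb a ha (by omega)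
  have e1 : f N (a * j + bb) = cl (a * j + bb) := hN1 j (Finset.mem_Icc.2 ⟨hj1, hj2⟩)
  have e2 : f N (a * 1 + bb) = cl (a * 1 + bb) :=
    hN1 1 (Finset.mem_Icc.2 ⟨le_refl 1, by omega⟩)
  have e3 : cl (a * j + bb) = cl (a * 1 + bb) := by
    have h1 := hmono j (Finset.mem_Icc.2 ⟨hj1, hj2⟩)
    have h2 := hmono 1 (Finset.mem_Icc.2 ⟨le_refl 1, by omega⟩)
    simp only [smul_eq_mul] at h1 h2
    rw [h1, h2]
  apply hjne
  have ea : bb + j * a = a * j + bb := by ring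
  have eb : bb + a = a * 1 + bb := by ring
  rw [ea, eb, e1, e3, ← e2]

end helpers

/-- Exponential Schur theorem: for every finite coloring of ℕ there exist
`x ≠ y`, both at least 2, with `x`, `y`, `x^y` monochromatic. -/
theorem exponential_schur (r : ℕ) (c : ℕ → Fin r) :
    ∃ x y : ℕ, 2 ≤ x ∧ 2 ≤ y ∧ x ≠ y ∧ c x = c y ∧ c x = c (x ^ y) := by
  obtain _ | r := r
  · exact (c 0).elim0
  set ψ : ℕ → Fin (r + 1) := fun n => c (2 ^ n) with hψdef
  -- Key claim: a monochromatic triple K, m, m·2^K for ψ.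
  suffices key : ∃ K m : ℕ, 1 ≤ K ∧ 1 ≤ m ∧ K ≠ m ∧ ψ K = ψ m ∧ ψ K = ψ (m * 2 ^ K) by
    obtain ⟨K, m, hK, hm, hne, h1, h2⟩ := key
    refine ⟨2 ^ m, 2 ^ K, ?_, ?_, ?_, ?_, ?_⟩
    · calc (2:ℕ) = 2 ^ 1 := by norm_num
        _ ≤ 2 ^ m := Nat.pow_le_pow_right (by norm_num) hm
    · calc (2:ℕ) = 2 ^ 1 := by norm_num
        _ ≤ 2 ^ K := Nat.pow_le_pow_right (by norm_num) hK
    · intro h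
      exact hne (Nat.pow_right_injective (le_refl 2) h.symm)
    · exact h1.symm
    · have hxy : (2 ^ m) ^ (2 ^ K) = 2 ^ (m * 2 ^ K) := by rw [← pow_mul]
      rw [hxy]
      exact h1.symm.trans h2
  -- Number of stages
  set k : ℕ := 2 ^ (r + 1) + 3 with hk
  have hk3 : 3 ≤ k := Nat.le_add_left 3 _
  have hk2 : k - 2 = 2 ^ (r + 1) + 1 := by omega
  -- finitary van der Waerden bounds for the product colorings used at each stage
  choose W hW using vdW_fin (Fin k → Fin (r + 1))
  -- Parameter recursion (lengths and bounds), built from the top stage downwards.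
  set PP : ℕ → ℕ × ℕ := fun t =>
    Nat.rec (3, max 3 (W 3)) (fun _ p => (2 ^ p.2 + 3, max p.2 (W (2 ^ p.2 + 3)))) t with hPPdef
  have hPP0 : PP 0 = (3, max 3 (W 3)) := rfl
  have hPPs : ∀ t, PP (t + 1) = (2 ^ (PP t).2 + 3, max (PP t).2 (W (2 ^ (PP t).2 + 3))) :=
    fun t => rfl
  have hL3' : ∀ t, 3 ≤ (PP t).1 := by
    intro t
    cases t with
    | zero => simp [hPP0]
    | succ t => rw [hPPs]; exact Nat.le_add_left 3 _
  have hWP : ∀ t, W ((PP t).1) ≤ (PP t).2 := by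
    intro t
    cases t with
    | zero => rw [hPP0]; exact le_max_right _ _
    | succ t => rw [hPPs]; exact le_max_right _ _
  have hmonoP : Monotone (fun t => (PP t).2) := by
    apply monotone_nat_of_le_succ
    intro t
    rw [hPPs]
    exact le_max_left _ _
  set L : ℕ → ℕ := fun s => (PP (k - 1 - s)).1 with hLdef
  set NN : ℕ → ℕ := fun s => (PP (k - 1 - s)).2 with hNNdef
  have hL3 : ∀ s, 3 ≤ L s := fun s => hL3' _
  have hWL : ∀ s, W (L s) ≤ NN s := fun s => hWP _
  have hgap : ∀ s w, s < w → w ≤ k - 1 → 2 ^ (NN w) + 3 ≤ L s := by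
    intro s w hsw hwk
    have hks : k - 1 - s = (k - 2 - s) + 1 := by omega
    have : L s = 2 ^ ((PP (k - 2 - s)).2) + 3 := by
      show (PP (k - 1 - s)).1 = _
      rw [hks, hPPs]
    rw [this]
    have hmono' : (PP (k - 1 - w)).2 ≤ (PP (k - 2 - s)).2 := hmonoP (by omega)
    have : (2:ℕ) ^ (NN w) ≤ 2 ^ ((PP (k - 2 - s)).2) :=
      Nat.pow_le_pow_right (by norm_num) hmono'
    omega
  -- Stage construction by recursion: stage data D i = (bᵢ, dᵢ).
  have stages : ∀ s : ℕ, ∃ D : ℕ → ℕ × ℕ, ∀ i, i < s →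
      0 < (D i).2 ∧ (D i).1 + (D i).2 ≤ NN i ∧
      ∀ j, 1 ≤ j → j ≤ L i → ∀ p, p < k →
        ψ (2 ^ ((D i).1 + j * (D i).2) * (if p < i then (D p).2 else 1)) =
        ψ (2 ^ ((D i).1 + (D i).2) * (if p < i then (D p).2 else 1)) := by
    intro s
    induction s with
    | zero => exact ⟨fun _ => (0, 1), fun i hi => absurd hi (Nat.not_lt_zero i)⟩
    | succ s ih =>
      obtain ⟨D, hD⟩ := ih
      -- apply van der Waerden to the product coloring at stage s
      obtain ⟨b, d, hd, hbd, hmono⟩ :=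
        hW (L s) (fun j => fun p : Fin k => ψ (2 ^ j * (if p.val < s then (D p.val).2 else 1)))
      refine ⟨Function.update D s (b, d), ?_⟩
      have hupd_ne : ∀ i, i ≠ s → Function.update D s (b, d) i = D i :=
        fun i hi => Function.update_of_ne hi _ _
      have hτ : ∀ i, i ≤ s → ∀ p,
          (if p < i then (Function.update D s (b, d) p).2 else 1) =
          (if p < i then (D p).2 else 1) := by
        intro i his p
        by_cases hpi : p < i
        · rw [if_pos hpi, if_pos hpi, hupd_ne p (by omega)]
        · rw [if_neg hpi, if_neg hpi]
      intro i hi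
      rcases Nat.lt_succ_iff_lt_or_eq.1 hi with hlt | rfl
      · obtain ⟨h1, h2, h3⟩ := hD i hlt
        rw [hupd_ne i (by omega)]
        refine ⟨h1, h2, ?_⟩
        intro j hj1 hj2 p hpk
        rw [hτ i (by omega) p]
        exact h3 j hj1 hj2 p hpk
      · rw [Function.update_self]
        have hbd' : b + d ≤ NN i := by
          have hL := hL3 i
          have h1 : d ≤ L i * d := Nat.le_mul_of_pos_left d (by omega)
          calc b + d ≤ b + L i * d := by omega
            _ ≤ W (L i) := hbd
            _ ≤ NN i := hWL i
        refine ⟨hd, hbd', ?_⟩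
        intro j hj1 hj2 p hpk
        rw [hτ i (le_refl i) p]
        have := congrFun (hmono j hj1 hj2) ⟨p, hpk⟩
        exact this
  obtain ⟨D, hD⟩ := stages k
  -- Either some stage succeeds (giving the triple), or we derive a contradiction.
  by_cases hs : ∃ i, i < k ∧ ∃ j p, 1 ≤ j ∧ j + 2 ≤ L i ∧ p < k ∧
      ψ (j * (D i).2) = ψ (2 ^ ((D i).1 + (D i).2) * (if p < i then (D p).2 else 1))
  · -- success: extract the triple
    obtain ⟨i, hik, j, p, hj1, hj2, hpk, heq⟩ := hs
    obtain ⟨hd, hbdNN, hmono⟩ := hD i hik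
    set b := (D i).1 with hbdef
    set d := (D i).2 with hddef
    set t := (if p < i then (D p).2 else 1) with htdef
    have ht : 1 ≤ t := by
      rw [htdef]
      by_cases hpi : p < i
      · rw [if_pos hpi]
        exact (hD p (by omega)).1
      · rw [if_neg hpi]
    set K := j * d with hKdef
    have hK1 : 1 ≤ K := by
      have := Nat.mul_le_mul hj1 hd
      omega
    have hA : ∀ j₀, 1 ≤ j₀ → j₀ ≤ L i → ψ (2 ^ (b + j₀ * d) * t) = ψ (2 ^ (b + d) * t) :=
      fun j₀ h1 h2 => hmono j₀ h1 h2 p hpk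
    have hA2K : ∀ j₀ : ℕ, (2 ^ (b + j₀ * d) * t) * 2 ^ K = 2 ^ (b + (j₀ + j) * d) * t := by
      intro j₀
      rw [hKdef]
      ring
    have hAne : (2 : ℕ) ^ (b + 1 * d) * t < 2 ^ (b + 2 * d) * t := by
      have hpow : (2:ℕ) ^ (b + 1 * d) < 2 ^ (b + 2 * d) :=
        Nat.pow_lt_pow_right (by norm_num) (by omega)
      exact Nat.mul_lt_mul_of_lt_of_le hpow (le_refl t) ht
    have hchoice : ∃ j₀, 1 ≤ j₀ ∧ j₀ ≤ 2 ∧ 2 ^ (b + j₀ * d) * t ≠ K := by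
      by_cases h1K : 2 ^ (b + 1 * d) * t = K
      · exact ⟨2, by omega, le_refl 2, by omega⟩
      · exact ⟨1, le_refl 1, by omega, h1K⟩
    obtain ⟨j₀, hj₀1, hj₀2, hmK⟩ := hchoice
    have hL3i := hL3 i
    refine ⟨K, 2 ^ (b + j₀ * d) * t, hK1, ?_, fun h => hmK h.symm, ?_, ?_⟩
    · have h0 : 0 < 2 ^ (b + j₀ * d) * t := Nat.mul_pos (Nat.pow_pos (by norm_num)) ht
      omega
    · rw [heq]
      exact (hA j₀ hj₀1 (by omega)).symm
    · rw [hA2K j₀, heq]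
      exact (hA (j₀ + j) (by omega) (by omega)).symm
  · -- failure at every stage: pigeonhole contradiction
    exfalso
    push_neg at hs
    have hcontra : ∀ v w, v ∈ Finset.Icc 1 (k - 2) → w ∈ Finset.Icc 1 (k - 2) → v < w →
        (Finset.range v).image
            (fun u => ψ (2 ^ ((D v).1 + (D v).2) * (if u < v then (D u).2 else 1))) =
          (Finset.range w).image
            (fun u => ψ (2 ^ ((D w).1 + (D w).2) * (if u < w then (D u).2 else 1))) → False := by
      intro v w hv hw hvw hIN
      obtain ⟨hv1, hv2⟩ := Finset.mem_Icc.1 hv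
      obtain ⟨hw1, hw2⟩ := Finset.mem_Icc.1 hw
      have hvk : v < k := by omega
      have hwk : w < k := by omega
      have hmem : ψ (2 ^ ((D w).1 + (D w).2) * (if v < w then (D v).2 else 1)) ∈
          (Finset.range w).image
            (fun u => ψ (2 ^ ((D w).1 + (D w).2) * (if u < w then (D u).2 else 1))) :=
        Finset.mem_image.2 ⟨v, Finset.mem_range.2 hvw, rfl⟩
      rw [← hIN] at hmem
      obtain ⟨u, hu, hρu⟩ := Finset.mem_image.1 hmem
      have huv : u < v := Finset.mem_range.1 hu
      have haw : (D w).1 + (D w).2 ≤ NN w := (hD w hwk).2.1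
      have hbound : 2 ^ ((D w).1 + (D w).2) + 2 ≤ L v := by
        have h1 := hgap v w hvw (by omega)
        have h2 : (2:ℕ) ^ ((D w).1 + (D w).2) ≤ 2 ^ (NN w) :=
          Nat.pow_le_pow_right (by norm_num) haw
        omega
      refine hs v hvk (2 ^ ((D w).1 + (D w).2)) u Nat.one_le_two_pow hbound (by omega) ?_
      rw [if_pos hvw] at hρu
      exact hρu.symm
    have hcard : (Finset.univ : Finset (Finset (Fin (r + 1)))).card <
        (Finset.Icc 1 (k - 2)).card := by
      rw [Finset.card_univ, Fintype.card_finset, Fintype.card_fin, Nat.card_Icc]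
      omega
    obtain ⟨v, hv, w, hw, hvw, hIN⟩ :=
      Finset.exists_ne_map_eq_of_card_lt_of_maps_to hcard
        (fun v _ => Finset.mem_univ ((Finset.range v).image
          (fun u => ψ (2 ^ ((D v).1 + (D v).2) * (if u < v then (D u).2 else 1)))))
    rcases hvw.lt_or_gt with hlt | hlt
    · exact hcontra v w hv hw hlt hIN
    · exact hcontra w v hw hv hlt hIN.symm
end

section
/- Fix an integer n > 1. If A ⊆ ℕ is piecewise syndetic with respect to multiplication, then there exist x, y ∈ A such that x·n^y ∈ A. -/
/-- `T` is multiplicatively thick (in the semigroup `(ℕ≥1, ·)`). -/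
def MulThick (T : Set ℕ) : Prop :=
  ∀ F : Finset ℕ, (∀ f ∈ F, 1 ≤ f) → ∃ x : ℕ, 1 ≤ x ∧ ∀ f ∈ F, f * x ∈ T

/-- `A` is multiplicatively piecewise syndetic. -/
def MulPiecewiseSyndetic (A : Set ℕ) : Prop :=
  ∃ F : Finset ℕ, (∀ f ∈ F, 1 ≤ f) ∧ MulThick (⋃ f ∈ F, {y : ℕ | f * y ∈ A})

/-- Pre-homogeneous sequences for colorings of pairs: a finite Ramsey-type lemma. -/
private lemma prehomog (F : Finset ℕ) (hF : F.Nonempty) :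
    ∀ (L : ℕ) (S : Finset ℕ), (F.card + 1) ^ L ≤ S.card →
    ∀ c : ℕ → ℕ → ℕ, (∀ i ∈ S, ∀ j ∈ S, i < j → c i j ∈ F) →
    ∃ v : Fin (L + 1) → ℕ, StrictMono v ∧ (∀ t, v t ∈ S) ∧
      ∃ χ : Fin (L + 1) → ℕ, (∀ t, χ t ∈ F) ∧
        ∀ i j : Fin (L + 1), i < j → c (v i) (v j) = χ i := by
  classical
  intro L
  induction L with
  | zero =>
      intro S hS c _hc
      have hSne : S.Nonempty := Finset.card_pos.mp (by simpa using hS)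
      obtain ⟨s, hs⟩ := hSne
      refine ⟨fun _ => s, ?_, fun _ => hs, fun _ => hF.choose, fun _ => hF.choose_spec, ?_⟩
      · intro i j hij
        have h1 : (i : ℕ) < (j : ℕ) := hij
        have h2 := j.isLt
        exact absurd h1 (by omega)
      · intro i j hij
        have h1 : (i : ℕ) < (j : ℕ) := hij
        have h2 := j.isLt
        exact absurd h1 (by omega)
  | succ L ih =>
      intro S hS c hc
      set k := F.card with hk
      have hk1 : 1 ≤ k := Finset.card_pos.mpr hF
      have hP1 : 1 ≤ (k + 1) ^ L := Nat.one_le_pow _ _ (by omega)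
      have hSne : S.Nonempty := by
        refine Finset.card_pos.mp ?_
        have : 1 ≤ (k + 1) ^ (L + 1) := Nat.one_le_pow _ _ (by omega)
        omega
      set v0 := S.min' hSne with hv0
      have hv0S : v0 ∈ S := S.min'_mem hSne
      set S' := S.erase v0 with hS'def
      have hmaps : ∀ s ∈ S', c v0 s ∈ F := by
        intro s hs
        have hsS : s ∈ S := Finset.mem_of_mem_erase hs
        have hne : s ≠ v0 := Finset.ne_of_mem_erase hs
        have : v0 < s := lt_of_le_of_ne (S.min'_le s hsS) (Ne.symm hne)
        exact hc v0 hv0S s hsS this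
      obtain ⟨Q, hQ⟩ : ∃ Q, (k + 1) ^ L = Q + 1 := ⟨(k + 1) ^ L - 1, by omega⟩
      have hcard : k * ((k + 1) ^ L - 1) < S'.card := by
        have h1 : S'.card = S.card - 1 := Finset.card_erase_of_mem hv0S
        have e2 : (k + 1) ^ (L + 1) = k * Q + Q + k + 1 := by
          rw [pow_succ, hQ]; ring
        have hS2 : (k + 1) ^ (L + 1) ≤ S.card := hS
        rw [hQ]
        have e3 : k * (Q + 1 - 1) = k * Q := by norm_num
        rw [e3]
        omega
      obtain ⟨f, hfF, hfib⟩ := Finset.exists_lt_card_fiber_of_mul_lt_card_of_maps_to hmaps hcard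
      set U := S'.filter (fun s => c v0 s = f) with hUdef
      have hUcard : (k + 1) ^ L ≤ U.card := by omega
      have hUS : ∀ s ∈ U, s ∈ S := fun s hs =>
        Finset.mem_of_mem_erase (Finset.mem_filter.mp hs).1
      have hcU : ∀ i ∈ U, ∀ j ∈ U, i < j → c i j ∈ F := fun i hi j hj hij =>
        hc i (hUS i hi) j (hUS j hj) hij
      obtain ⟨v, hvmono, hvmem, χ, hχF, hhom⟩ := ih U hUcard c hcU
      have h0 : ∀ b : Fin (L + 1), v0 < v b := by
        intro b
        have h1 : v b ∈ S' := (Finset.mem_filter.mp (hvmem b)).1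
        have h2 : v b ∈ S := Finset.mem_of_mem_erase h1
        exact lt_of_le_of_ne (S.min'_le _ h2) (Ne.symm (Finset.ne_of_mem_erase h1))
      refine ⟨Fin.cons v0 v, ?_, ?_, Fin.cons f χ, ?_, ?_⟩
      · intro a b hab
        rcases Fin.eq_zero_or_eq_succ a with rfl | ⟨a', rfl⟩
        · rcases Fin.eq_zero_or_eq_succ b with rfl | ⟨b', rfl⟩
          · exact absurd hab (lt_irrefl _)
          · rw [Fin.cons_zero, Fin.cons_succ]; exact h0 b'
        · rcases Fin.eq_zero_or_eq_succ b with rfl | ⟨b', rfl⟩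
          · exact absurd hab (Fin.not_lt_zero _)
          · rw [Fin.cons_succ, Fin.cons_succ]
            exact hvmono (Fin.succ_lt_succ_iff.mp hab)
      · intro t
        rcases Fin.eq_zero_or_eq_succ t with rfl | ⟨t', rfl⟩
        · rw [Fin.cons_zero]; exact hv0S
        · rw [Fin.cons_succ]; exact hUS _ (hvmem t')
      · intro t
        rcases Fin.eq_zero_or_eq_succ t with rfl | ⟨t', rfl⟩
        · rw [Fin.cons_zero]; exact hfF
        · rw [Fin.cons_succ]; exact hχF t'
      · intro i j hij
        rcases Fin.eq_zero_or_eq_succ i with rfl | ⟨i', rfl⟩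
        · rcases Fin.eq_zero_or_eq_succ j with rfl | ⟨j', rfl⟩
          · exact absurd hij (lt_irrefl _)
          · rw [Fin.cons_zero, Fin.cons_succ, Fin.cons_zero]
            exact (Finset.mem_filter.mp (hvmem j')).2
        · rcases Fin.eq_zero_or_eq_succ j with rfl | ⟨j', rfl⟩
          · exact absurd hij (Fin.not_lt_zero _)
          · rw [Fin.cons_succ, Fin.cons_succ, Fin.cons_succ]
            exact hhom i' j' (Fin.succ_lt_succ_iff.mp hij)

/-- Finite Ramsey theorem for pairs with colors in `F`, monochromatic clique of size `m+1`. -/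
private lemma ramsey_clique (F : Finset ℕ) (hF : F.Nonempty) (m : ℕ) :
    ∃ N : ℕ, 1 ≤ N ∧ ∀ c : ℕ → ℕ → ℕ, (∀ i j : ℕ, i < j → j < N → c i j ∈ F) →
    ∃ t : Fin (m + 1) → ℕ, StrictMono t ∧ (∀ i, t i < N) ∧
      ∃ f ∈ F, ∀ i j : Fin (m + 1), i < j → c (t i) (t j) = f := by
  classical
  set k := F.card with hk
  set L := k * (m + 1) with hL
  refine ⟨(k + 1) ^ L, Nat.one_le_pow _ _ (by omega), ?_⟩
  intro c hc
  have hS : (F.card + 1) ^ L ≤ (Finset.range ((k + 1) ^ L)).card := by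
    rw [Finset.card_range, ← hk]
  have hc' : ∀ i ∈ Finset.range ((k + 1) ^ L), ∀ j ∈ Finset.range ((k + 1) ^ L),
      i < j → c i j ∈ F := fun i _ j hj hij => hc i j hij (Finset.mem_range.mp hj)
  obtain ⟨v, hmono, hmem, χ, hχ, hhom⟩ := prehomog F hF L _ hS c hc'
  have hmaps : ∀ a ∈ (Finset.univ : Finset (Fin (L + 1))), χ a ∈ F := fun a _ => hχ a
  have hlt : F.card * m < (Finset.univ : Finset (Fin (L + 1))).card := by
    rw [Finset.card_univ, Fintype.card_fin, ← hk]
    have : k * (m + 1) = k * m + k := by ring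
    omega
  obtain ⟨f, hfF, hfib⟩ := Finset.exists_lt_card_fiber_of_mul_lt_card_of_maps_to hmaps hlt
  set G := Finset.univ.filter (fun a => χ a = f) with hG
  have hGcard : m + 1 ≤ G.card := hfib
  set e := G.orderEmbOfCardLe hGcard with he
  refine ⟨fun i => v (e i), hmono.comp e.strictMono, ?_, f, hfF, ?_⟩
  · intro i; exact Finset.mem_range.mp (hmem (e i))
  · intro i j hij
    have h1 : e i < e j := e.strictMono hij
    rw [hhom (e i) (e j) h1]
    have h2 : e i ∈ G := G.orderEmbOfCardLe_mem hGcard i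
    exact (Finset.mem_filter.mp h2).2

/-- Every multiplicatively piecewise syndetic set contains `x, y` with `x·n^y` in it. -/
theorem mulPWS_exponential (n : ℕ) (hn : 1 < n) (A : Set ℕ)
    (hA : MulPiecewiseSyndetic A) :
    ∃ x ∈ A, ∃ y ∈ A, x * n ^ y ∈ A := by
  classical
  obtain ⟨F, hFpos, hT⟩ := hA
  have memT : ∀ {y : ℕ}, y ∈ (⋃ f ∈ F, {y : ℕ | f * y ∈ A}) → ∃ f ∈ F, f * y ∈ A := by
    intro y hy
    simpa using hy
  have hF : F.Nonempty := by
    obtain ⟨x, hx1, hx⟩ := hT {1} (by simp)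
    obtain ⟨f, hfF, _⟩ := memT (hx 1 (by simp))
    exact ⟨f, hfF⟩
  obtain ⟨N, hN1, hram⟩ := ramsey_clique F hF F.card
  obtain ⟨x, hx1, hx⟩ := hT (Finset.Icc 1 N) (fun f hf => (Finset.mem_Icc.mp hf).1)
  have hcol : ∀ i j : ℕ, i < j → j < N → ∃ f ∈ F, f * ((j - i) * x) ∈ A := by
    intro i j hij hjN
    have hmem : (j - i) ∈ Finset.Icc 1 N := Finset.mem_Icc.mpr ⟨by omega, by omega⟩
    exact memT (hx _ hmem)
  set c : ℕ → ℕ → ℕ := fun i j =>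
    if h : ∃ f ∈ F, f * ((j - i) * x) ∈ A then h.choose else 0 with hcdef
  have hcprop : ∀ i j : ℕ, i < j → j < N → c i j ∈ F ∧ (c i j) * ((j - i) * x) ∈ A := by
    intro i j hij hjN
    have h := hcol i j hij hjN
    have : c i j = h.choose := by simp only [hcdef, dif_pos h]
    rw [this]
    exact ⟨h.choose_spec.1, h.choose_spec.2⟩
  obtain ⟨t, htmono, htlt, f, hfF, hclique⟩ :=
    hram c (fun i j hij hjN => (hcprop i j hij hjN).1)
  have hdiffA : ∀ i j : Fin (F.card + 1), i < j → f * ((t j - t i) * x) ∈ A := by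
    intro i j hij
    have h := (hcprop (t i) (t j) (htmono hij) (htlt j)).2
    rwa [hclique i j hij] at h
  have hf1 : 1 ≤ f := hFpos f hfF
  set σ : Fin (F.card + 1) → ℕ := fun i => f * (t i * x) with hσ
  have hσmono : StrictMono σ := by
    intro a b hab
    have h2 : t a * x < t b * x := mul_lt_mul_of_pos_right (htmono hab) (by omega)
    exact mul_lt_mul_of_pos_left h2 (by omega)
  have hσdiff : ∀ i j : Fin (F.card + 1), σ j - σ i = f * ((t j - t i) * x) := by
    intro i j
    simp only [hσ]
    rw [Nat.sub_mul, Nat.mul_sub]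
  obtain ⟨z, hz1, hz⟩ := hT ((Finset.univ : Finset (Fin (F.card + 1))).image (fun i => n ^ σ i))
    (by
      intro q hq
      obtain ⟨i, _, rfl⟩ := Finset.mem_image.mp hq
      exact Nat.one_le_pow _ _ (by omega))
  have hgex : ∀ i : Fin (F.card + 1), ∃ g ∈ F, g * (n ^ σ i * z) ∈ A := by
    intro i
    exact memT (hz _ (Finset.mem_image_of_mem _ (Finset.mem_univ i)))
  set g : Fin (F.card + 1) → ℕ := fun i => (hgex i).choose with hg
  have hgprop : ∀ i, g i ∈ F ∧ g i * (n ^ σ i * z) ∈ A := fun i =>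
    ⟨(hgex i).choose_spec.1, (hgex i).choose_spec.2⟩
  have key : ∀ a b : Fin (F.card + 1), a < b → g a = g b →
      ∃ x ∈ A, ∃ y ∈ A, x * n ^ y ∈ A := by
    intro a b hab he
    refine ⟨g a * (n ^ σ a * z), (hgprop a).2, f * ((t b - t a) * x), hdiffA a b hab, ?_⟩
    have hle : σ a ≤ σ b := le_of_lt (hσmono hab)
    have hpow : n ^ σ a * n ^ (f * ((t b - t a) * x)) = n ^ σ b := by
      rw [← hσdiff a b, ← pow_add]
      congr 1
      omega
    have heq : g a * (n ^ σ a * z) * n ^ (f * ((t b - t a) * x)) = g a * (n ^ σ b * z) := by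
      calc g a * (n ^ σ a * z) * n ^ (f * ((t b - t a) * x))
          = g a * ((n ^ σ a * n ^ (f * ((t b - t a) * x))) * z) := by ring
        _ = g a * (n ^ σ b * z) := by rw [hpow]
    rw [heq, he]
    exact (hgprop b).2
  have hne : ∃ a b : Fin (F.card + 1), a ≠ b ∧ g a = g b := by
    have hcard : F.card < (Finset.univ : Finset (Fin (F.card + 1))).card := by simp
    obtain ⟨a, _, b, _, hab, heq⟩ :=
      Finset.exists_ne_map_eq_of_card_lt_of_maps_to hcard (fun i _ => (hgprop i).1)
    exact ⟨a, b, hab, heq⟩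
  obtain ⟨a, b, hab, heq⟩ := hne
  rcases lt_or_gt_of_ne hab with h | h
  · exact key a b h heq
  · exact key b a h heq.symm
end

section
/- Let A = ⋃_{n∈ℕ} [xₙ, yₙ] where x₁ = y₁ > 2 and for each n: yₙ^{yₙ} < x_{n+1} ≤ y_{n+1} < x_{n+1}² < 2^{x_{n+1}}. Then for all x, y ∈ A with x < y one has x^y ∉ A. -/
/-- If `A = ⋃ n, [xₙ, yₙ]` with `x₀ = y₀ > 2` and
`yₙ^yₙ < x_{n+1} ≤ y_{n+1} < x_{n+1}² < 2^{x_{n+1}}`, then for `x < y` in `A`,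
`x^y ∉ A`. -/
theorem pow_not_mem_lt (x y : ℕ → ℕ) (h1 : 2 < x 0) (h2 : x 0 = y 0)
    (hgap : ∀ n : ℕ, (y n) ^ (y n) < x (n + 1) ∧ x (n + 1) ≤ y (n + 1) ∧
      y (n + 1) < (x (n + 1)) ^ 2 ∧ (x (n + 1)) ^ 2 < 2 ^ (x (n + 1))) :
    ∀ a ∈ ⋃ n : ℕ, Set.Icc (x n) (y n), ∀ b ∈ ⋃ n : ℕ, Set.Icc (x n) (y n),
      a < b → a ^ b ∉ ⋃ n : ℕ, Set.Icc (x n) (y n) := by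
  have hxy : ∀ n, 3 ≤ x n ∧ x n ≤ y n := by
    intro n
    induction n with
    | zero => exact ⟨h1, h2.le⟩
    | succ n ih =>
      obtain ⟨h3, hle⟩ := ih
      obtain ⟨hg, hle', _⟩ := hgap n
      have hself : y n ≤ y n ^ y n := Nat.le_self_pow (by omega) _
      exact ⟨by omega, hle'⟩
  have hchain : ∀ n, y n < x (n + 1) := by
    intro n
    have hg := (hgap n).1
    have h3 := hxy n
    have hself : y n ≤ y n ^ y n := Nat.le_self_pow (by omega) _
    omega
  have hxmono : Monotone x := monotone_nat_of_le_succ fun n => by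
    have := hchain n; have := (hxy n).2; omega
  have hymono : Monotone y := monotone_nat_of_le_succ fun n => by
    have := hchain n; have := (hxy (n + 1)).2; omega
  have hy2 : ∀ n, y n < 2 ^ x n := by
    intro n
    cases n with
    | zero => rw [← h2]; exact Nat.lt_two_pow_self
    | succ n =>
      obtain ⟨_, _, h3, h4⟩ := hgap n
      omega
  intro a ha b hb hab hmem
  simp only [Set.mem_iUnion, Set.mem_Icc] at ha hb hmem
  obtain ⟨m, ham1, ham2⟩ := ha
  obtain ⟨k, hbk1, hbk2⟩ := hb
  obtain ⟨n, hn1, hn2⟩ := hmem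
  have ha3 : 3 ≤ a := le_trans (hxy m).1 ham1
  -- lower bound: y k < a ^ b
  have hlow : y k < a ^ b :=
    calc y k < 2 ^ x k := hy2 k
      _ ≤ 2 ^ b := Nat.pow_le_pow_right (by norm_num) hbk1
      _ ≤ a ^ b := Nat.pow_le_pow_left (by omega) b
  -- upper bound: a ^ b < x (k + 1)
  have hhigh : a ^ b < x (k + 1) :=
    calc a ^ b ≤ a ^ y k := Nat.pow_le_pow_right (by omega) hbk2
      _ < y k ^ y k := Nat.pow_lt_pow_left (by omega) (by have := (hxy k); omega)
      _ < x (k + 1) := (hgap k).1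
  rcases le_or_gt n k with h | h
  · have := hymono h
    omega
  · have := hxmono (show k + 1 ≤ n from h)
    omega
end

section
/- Let A = ⋃_{n∈ℕ} [xₙ, yₙ] where x₁ = y₁ > 2 and for each n: yₙ^{yₙ} < x_{n+1} ≤ y_{n+1} < x_{n+1}² < 2^{x_{n+1}}. Then for all x, y ∈ A with x > y ≥ 2 one has x^y ∉ A. -/
/-- If `A = ⋃ n, [xₙ, yₙ]` with `x₀ = y₀ > 2` and
`yₙ^yₙ < x_{n+1} ≤ y_{n+1} < x_{n+1}² < 2^{x_{n+1}}`, then for `x > y ≥ 2` in `A`,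
`x^y ∉ A`. -/
theorem pow_not_mem_gt (x y : ℕ → ℕ) (h1 : 2 < x 0) (h2 : x 0 = y 0)
    (hgap : ∀ n : ℕ, (y n) ^ (y n) < x (n + 1) ∧ x (n + 1) ≤ y (n + 1) ∧
      y (n + 1) < (x (n + 1)) ^ 2 ∧ (x (n + 1)) ^ 2 < 2 ^ (x (n + 1))) :
    ∀ a ∈ ⋃ n : ℕ, Set.Icc (x n) (y n), ∀ b ∈ ⋃ n : ℕ, Set.Icc (x n) (y n),
      b < a → 2 ≤ b → a ^ b ∉ ⋃ n : ℕ, Set.Icc (x n) (y n) := by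
  have hxy : ∀ n, x n ≤ y n := by
    intro n; cases n with
    | zero => exact h2.le
    | succ n => exact (hgap n).2.1
  have hx3 : ∀ n, 3 ≤ x n := by
    intro n; induction n with
    | zero => omega
    | succ n ih =>
      have hg := (hgap n).1
      have h1 := hxy n
      have h2 : y n ≤ y n ^ y n := Nat.le_self_pow (by omega) _
      omega
  have hyx : ∀ n, y n < x (n + 1) := by
    intro n
    have hg := (hgap n).1
    have h1 := hxy n
    have hx := hx3 n
    have h2 : y n ≤ y n ^ y n := Nat.le_self_pow (by omega) _
    omega
  have hmx : Monotone x := monotone_nat_of_le_succ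
    (fun n => by have := hyx n; have := hxy n; omega)
  have hmy : Monotone y := monotone_nat_of_le_succ
    (fun n => by have := hyx n; have := hxy (n + 1); omega)
  have hysq : ∀ n, y n < x n ^ 2 := by
    intro n; cases n with
    | zero => have := h1; nlinarith [h2]
    | succ n => exact (hgap n).2.2.1
  intro a ha b hb hba hb2 hmem
  simp only [Set.mem_iUnion, Set.mem_Icc] at ha hb hmem
  obtain ⟨m, ham1, ham2⟩ := ha
  obtain ⟨n, hn1, hn2⟩ := hmem
  have hy1 : 1 ≤ y m := le_trans (by linarith [hx3 m]) (hxy m)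
  have hub : a ^ b ≤ y m ^ y m := by
    calc a ^ b ≤ y m ^ b := Nat.pow_le_pow_left ham2 b
    _ ≤ y m ^ y m := Nat.pow_le_pow_right hy1 (by omega)
  have hlb : y m < a ^ b := by
    calc y m < x m ^ 2 := hysq m
    _ ≤ a ^ 2 := Nat.pow_le_pow_left ham1 2
    _ ≤ a ^ b := Nat.pow_le_pow_right (by omega) hb2
  rcases le_or_gt n m with h | h
  · have := hmy h; omega
  · have hxle := hmx h
    have h3 : a ^ b < x (m + 1) := lt_of_le_of_lt hub (hgap m).1
    have := hmx (show m + 1 ≤ n from h)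
    omega
end

section
/- For the semigroup of ultrafilters (βℕ, +) (ultrafilters on ℕ with the extension of addition), if p belongs to a minimal left ideal of (βℕ, +), then there exists an ultrafilter u in that minimal left ideal such that u + p = p. -/
/-- The extension of addition on ℕ to ultrafilters:
`A ∈ p + q ↔ {x | {y | x + y ∈ A} ∈ q} ∈ p`. -/
def uadd (p q : Ultrafilter ℕ) : Ultrafilter ℕ :=
  p.bind fun x => q.map fun y => x + y

/-- `L` is a left ideal of `(βℕ, +)`. -/
def IsLeftIdeal (L : Set (Ultrafilter ℕ)) : Prop :=
  L.Nonempty ∧ ∀ p ∈ L, ∀ q : Ultrafilter ℕ, uadd q p ∈ L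

/-- `L` is a minimal left ideal of `(βℕ, +)`. -/
def IsMinimalLeftIdeal (L : Set (Ultrafilter ℕ)) : Prop :=
  IsLeftIdeal L ∧ ∀ L' : Set (Ultrafilter ℕ), IsLeftIdeal L' → L' ⊆ L → L' = L

attribute [local instance] Ultrafilter.add Ultrafilter.addSemigroup

lemma uadd_eq (p q : Ultrafilter ℕ) : uadd p q = p + q := rfl

lemma uadd_assoc (p q r : Ultrafilter ℕ) :
    uadd (uadd p q) r = uadd p (uadd q r) := by
  simp only [uadd_eq, add_assoc]

/-- If `p` lies in a minimal left ideal `L` of `(βℕ, +)`, then `u + p = p` for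
some `u ∈ L`. -/
theorem exists_uadd_eq_of_minimalLeftIdeal (L : Set (Ultrafilter ℕ))
    (hL : IsMinimalLeftIdeal L) (p : Ultrafilter ℕ) (hp : p ∈ L) :
    ∃ u ∈ L, uadd u p = p := by
  obtain ⟨⟨hne, hideal⟩, hmin⟩ := hL
  set L' : Set (Ultrafilter ℕ) := {r | ∃ q ∈ L, uadd q p = r} with hL'
  have hsub : L' ⊆ L := by
    rintro r ⟨q, hq, rfl⟩
    exact hideal p hp q
  have hLI : IsLeftIdeal L' := by
    constructor
    · exact ⟨uadd p p, p, hp, rfl⟩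
    · rintro r ⟨q, hq, rfl⟩ s
      exact ⟨uadd s q, hideal q hq s, uadd_assoc s q p⟩
  have := hmin L' hLI hsub
  have hpL' : p ∈ L' := this ▸ hp
  obtain ⟨u, hu, huu⟩ := hpL'
  exact ⟨u, hu, huu⟩
end

section
/- Let n > 1 and let a ≠ b be natural numbers, and let p be an ultrafilter on ℕ. Then a + p and b + p cannot both belong to ℍₙ = {q ∈ βℕ : ∀m, n^m ℕ ∈ q}. (Equivalently: at most one shift m + p of p lies in ℍₙ.) -/
/-- At most one shift `m + p` of an ultrafilter `p` can lie in
`ℍₙ = {q | ∀ m, n^m ℕ ∈ q}`: two distinct shifts `a + p` and `b + p` cannot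
both belong to `ℍₙ`. -/
theorem shifts_not_both_in_H (n : ℕ) (hn : 1 < n) (a b : ℕ) (hab : a ≠ b)
    (p : Ultrafilter ℕ) :
    ¬ ((∀ m : ℕ, {x : ℕ | n ^ m ∣ x} ∈ Ultrafilter.map (fun x => a + x) p) ∧
       (∀ m : ℕ, {x : ℕ | n ^ m ∣ x} ∈ Ultrafilter.map (fun x => b + x) p)) := by
  rintro ⟨ha, hb⟩
  obtain ⟨m, hm⟩ : ∃ m, max a b < n ^ m := ⟨max a b, Nat.lt_pow_self hn⟩
  have h1 : {x : ℕ | n ^ m ∣ a + x} ∈ p := ha m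
  have h2 : {x : ℕ | n ^ m ∣ b + x} ∈ p := hb m
  obtain ⟨x, hx1, hx2⟩ := (Ultrafilter.nonempty_of_mem (p.inter_mem h1 h2) : Set.Nonempty _)
  -- n^m divides both a+x and b+x, hence divides their difference
  rcases Nat.lt_or_ge a b with h | h
  · have hd : n ^ m ∣ (b + x) - (a + x) := Nat.dvd_sub hx2 hx1
    rw [Nat.add_sub_add_right] at hd
    have : b - a < n ^ m := lt_of_le_of_lt (Nat.sub_le _ _) (lt_of_le_of_lt (le_max_right a b) hm)
    have := Nat.eq_zero_of_dvd_of_lt hd this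
    omega
  · have hd : n ^ m ∣ (a + x) - (b + x) := Nat.dvd_sub hx1 hx2
    rw [Nat.add_sub_add_right] at hd
    have : a - b < n ^ m := lt_of_le_of_lt (Nat.sub_le _ _) (lt_of_le_of_lt (le_max_left a b) hm)
    have := Nat.eq_zero_of_dvd_of_lt hd this
    omega
end

section
/- Fix n > 1. For every r-coloring of ℕ and every multiplicatively syndetic set S ⊆ ℕ with ℕ = ⋃_{t∈F} t⁻¹S and |F| = r, and every IP_{r+1} set FS(b₁,...,b_{r+1}) ⊆ A: by pigeonhole on the r+1 elements n^{b₁+⋯+b_m} (m = 1,...,r+1) distributed among the r sets t⁻¹S, there exist t ∈ F and m < m' such that both t·n^{b₁+⋯+b_m} ∈ S and t·n^{b₁+⋯+b_{m'}} ∈ S; writing b = n^{b₁+⋯+b_m} and c = b_{m+1}+⋯+b_{m'}, one gets t·b ∈ S and (t·b)·n^c ∈ S. -/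
/-- Pigeonhole core of the second proof of the exponential Schur theorem:
if `ℕ = ⋃_{t ∈ F} t⁻¹S` with `|F| = r`, and `FS(b₀, …, b_r) ⊆ A`, then there
are `t ∈ F` and `m < m' ≤ r + 1` with both `t·n^{b₀+⋯+b_{m-1}} ∈ S` and
`t·n^{b₀+⋯+b_{m'-1}} ∈ S`; hence with `z = t·n^{b₀+⋯+b_{m-1}}` and
`c = b_m + ⋯ + b_{m'-1}` we get `z ∈ S`, `z·n^c ∈ S` and `c ∈ A`. -/
theorem pigeonhole_exponential_schur (n : ℕ) (hn : 1 < n) (r : ℕ)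
    (F : Finset ℕ) (hF : F.card = r) (S A : Set ℕ)
    (hcov : ∀ y : ℕ, ∃ t ∈ F, t * y ∈ S) (b : ℕ → ℕ)
    (hb : ∀ H : Finset ℕ, H.Nonempty → H ⊆ Finset.range (r + 1) →
      (∑ i ∈ H, b i) ∈ A) :
    ∃ t ∈ F, ∃ m m' : ℕ, 1 ≤ m ∧ m < m' ∧ m' ≤ r + 1 ∧
      t * n ^ (∑ i ∈ Finset.range m, b i) ∈ S ∧
      t * n ^ (∑ i ∈ Finset.range m', b i) ∈ S ∧
      (t * n ^ (∑ i ∈ Finset.range m, b i)) * n ^ (∑ i ∈ Finset.Ico m m', b i) ∈ S ∧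
      (∑ i ∈ Finset.Ico m m', b i) ∈ A := by
  -- choose for each m a color t m
  choose t ht hts using fun m : ℕ => hcov (n ^ (∑ i ∈ Finset.range (m + 1), b i))
  -- pigeonhole on range (r+1) → F
  have hmaps : ∀ m ∈ Finset.range (r + 1), t m ∈ F := fun m _ => ht m
  have hcard : F.card < (Finset.range (r + 1)).card := by
    simp [hF]
  obtain ⟨m₁, hm₁, m₂, hm₂, hne, heq⟩ :=
    Finset.exists_ne_map_eq_of_card_lt_of_maps_to hcard hmaps
  wlog hlt : m₁ < m₂ generalizing m₁ m₂
  · exact this m₂ hm₂ m₁ hm₁ hne.symm heq.symm (by omega)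
  refine ⟨t m₁, ht m₁, m₁ + 1, m₂ + 1, by omega, by omega,
    by have := Finset.mem_range.mp hm₂; omega, hts m₁, heq ▸ hts m₂, ?_, ?_⟩
  · have hsplit : (∑ i ∈ Finset.range (m₁ + 1), b i) + ∑ i ∈ Finset.Ico (m₁ + 1) (m₂ + 1), b i
        = ∑ i ∈ Finset.range (m₂ + 1), b i := by
      rw [Finset.range_eq_Ico]
      simp only [Finset.range_eq_Ico]
      exact Finset.sum_Ico_consecutive b (m := 0) (n := m₁ + 1) (k := m₂ + 1) (by omega) (by omega)
    rw [mul_assoc, ← pow_add, hsplit]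
    exact heq ▸ hts m₂
  · apply hb
    · exact ⟨m₁ + 1, Finset.mem_Ico.mpr ⟨le_refl _, by omega⟩⟩
    · intro x hx
      simp only [Finset.mem_Ico] at hx
      exact Finset.mem_range.mpr (by have := Finset.mem_range.mp hm₂; omega)
end
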